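/- Fix integers n ≥ 4 and g ≥ 2. Consider all n-tuples of rationals u₁ < u₂ < ⋯ < u_n such that each u_i is a half-odd-integer (u_i ∈ ℤ + 1/2), all successive differences u_{i+1} − u_i are integers, u₁ + u₂ > 0, and u_{n−1} + u_n < 2n. Then the sum over all such tuples U of (4·(2n)^n / Π_{2n}(U))^{g−1} equals 2^{3g−1}. -/

import Mathlib

/-- The function `f_k(r) = 4 sin²(rπ/k)`. -/
noncomputable def f (k : ℕ) (r : ℝ) : ℝ := 4 * Real.sin (r * Real.pi / k) ^ 2

/-- `Π_k(U) = ∏_{1 ≤ i < j ≤ n} f_k(u_i - u_j) f_k(u_i + u_j)` for a tuple `u` of rationals. -/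
noncomputable def Pi (k n : ℕ) (u : Fin n → ℚ) : ℝ :=
  ∏ i : Fin n, ∏ j ∈ Finset.univ.filter (fun j => i < j),
    f k ((u i : ℝ) - (u j : ℝ)) * f k ((u i : ℝ) + (u j : ℝ))

open Real Finset

section fLemmas

lemma f_eq_cos (k : ℕ) (r : ℝ) : f k r = 2 - 2 * Real.cos (2 * (r * Real.pi / k)) := by
  rw [f, Real.cos_two_mul]
  nlinarith [Real.sin_sq_add_cos_sq (r * Real.pi / k)]

lemma normSq_one_sub_exp (θ : ℝ) :
    Complex.normSq (1 - Complex.exp (θ * Complex.I)) = 2 - 2 * Real.cos θ := by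
  rw [Complex.exp_mul_I]
  simp only [Complex.normSq_apply, Complex.sub_re, Complex.sub_im, Complex.one_re,
    Complex.one_im, Complex.add_re, Complex.add_im, Complex.mul_re, Complex.mul_im,
    Complex.I_re, Complex.I_im, Complex.cos_ofReal_re, Complex.cos_ofReal_im,
    Complex.sin_ofReal_re, Complex.sin_ofReal_im]
  nlinarith [Real.sin_sq_add_cos_sq θ]

lemma f_eq_normSq (N : ℕ) (hN : N ≠ 0) (m : ℕ) :
    f N (m : ℝ) = Complex.normSq (1 - Complex.exp (2 * Real.pi * Complex.I / N) ^ m) := by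
  have hNR : (N:ℝ) ≠ 0 := Nat.cast_ne_zero.2 hN
  rw [← Complex.exp_nat_mul]
  have : (m : ℂ) * (2 * Real.pi * Complex.I / N)
      = ((2 * (m * Real.pi / N) : ℝ) : ℂ) * Complex.I := by
    push_cast
    field_simp
  rw [this, normSq_one_sub_exp, f_eq_cos]

/-- The key product identity `∏_{m=1}^{N} f_{N+1}(m) = (N+1)²`. -/
lemma prod_f (N : ℕ) :
    ∏ m ∈ range N, f (N + 1) ((m : ℝ) + 1) = ((N : ℝ) + 1) ^ 2 := by
  have hprim := Complex.isPrimitiveRoot_exp (N+1) (Nat.succ_ne_zero N)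
  have key := hprim.prod_one_sub_pow_eq_order
  have h2 := congrArg Complex.normSq key
  rw [map_prod Complex.normSq _ _] at h2
  calc ∏ m ∈ range N, f (N + 1) ((m : ℝ) + 1)
      = ∏ m ∈ range N,
          Complex.normSq (1 - Complex.exp (2 * Real.pi * Complex.I / ((N+1:ℕ):ℂ)) ^ (m+1)) := by
        refine Finset.prod_congr rfl fun m _ => ?_
        rw [← f_eq_normSq (N+1) (Nat.succ_ne_zero N) (m+1)]
        push_cast; ring_nf
    _ = ((N : ℝ) + 1) ^ 2 := by
        rw [h2]
        simp [Complex.normSq_apply]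
        ring

lemma f_nonneg (k : ℕ) (r : ℝ) : 0 ≤ f k r := by
  rw [f]; positivity

lemma f_even (k : ℕ) (r : ℝ) : f k (-r) = f k r := by
  rw [f, f, neg_mul, neg_div, Real.sin_neg, neg_sq]

lemma f_period (k : ℕ) (r : ℝ) : f k (r + k) = f k r := by
  rcases Nat.eq_zero_or_pos k with h | h
  · simp [h]
  · have hk : (k:ℝ) ≠ 0 := Nat.cast_ne_zero.2 h.ne'
    rw [f, f]
    have : (r + k) * Real.pi / k = r * Real.pi / k + Real.pi := by
      field_simp
    rw [this, Real.sin_add_pi, neg_sq]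

/-- Robust equality tool for `f`. -/
lemma f_eq (k : ℕ) {x y : ℝ}
    (h : x = y ∨ x = -y ∨ x = y + k ∨ x = -y + k ∨ x = y - k ∨ x = -y - k) :
    f k x = f k y := by
  rcases h with h | h | h | h | h | h <;> subst h
  · rfl
  · exact f_even k y
  · exact f_period k y
  · rw [f_period k (-y), f_even]
  · rw [show y - (k:ℝ) = (y - k) + k - k by ring]
    rw [sub_add_cancel, ← f_period k (y - k), sub_add_cancel]
  · rw [show -y - (k:ℝ) = -(y + k) by ring, f_even, f_period]

lemma f_pos (k : ℕ) (m : ℕ) (h0 : 0 < m) (hk : m < k) : 0 < f k (m : ℝ) := by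
  have hkpos : 0 < (k:ℝ) := by exact_mod_cast h0.trans hk
  rw [f]
  have h1 : 0 < (m:ℝ) * Real.pi / k := by
    have hm : 0 < (m:ℝ) := by exact_mod_cast h0
    exact div_pos (mul_pos hm Real.pi_pos) hkpos
  have h2 : (m:ℝ) * Real.pi / k < Real.pi := by
    rw [div_lt_iff₀ hkpos]
    have : (m:ℝ) < k := by exact_mod_cast hk
    nlinarith [Real.pi_pos]
  have := Real.sin_pos_of_pos_of_lt_pi h1 h2
  positivity

end fLemmas

section PartialProducts

variable (n : ℕ)

/-- Partial product `Q t = ∏_{m=1}^{t} f_{2n}(m)`. -/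
noncomputable def Q (n t : ℕ) : ℝ := ∏ m ∈ range t, f (2*n) ((m : ℝ) + 1)

lemma Q_succ (t : ℕ) : Q n (t+1) = Q n t * f (2*n) ((t:ℝ)+1) := by
  rw [Q, Q, prod_range_succ]

lemma Q_full (hn : 1 ≤ n) : Q n (2*n - 1) = (2*(n:ℝ))^2 := by
  have h : 2*n - 1 + 1 = 2*n := by omega
  have := prod_f (2*n - 1)
  rw [h] at this
  rw [Q, this]
  have : ((2*n-1 : ℕ) : ℝ) = 2*n - 1 := by
    push_cast [Nat.cast_sub (by omega : 1 ≤ 2*n)]; ring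
  rw [this]; ring

/-- `Q a * Q b = (2n)²` when `a + b = 2n - 1`. -/
lemma Q_reflect (hn : 1 ≤ n) : ∀ b a, a + b = 2*n - 1 → Q n a * Q n b = (2*(n:ℝ))^2 := by
  intro b
  induction b with
  | zero =>
    intro a ha
    have h : a = 2*n-1 := by omega
    subst h
    rw [show Q n 0 = 1 from by simp [Q], mul_one]
    exact Q_full n hn
  | succ b ih =>
    intro a ha
    have hfa : f (2*n) ((a:ℝ)+1) = f (2*n) ((b:ℝ)+1) := by
      apply f_eq
      right; right; right; left
      have h : a + b + 2 = 2*n := by omega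
      have h2 : ((a:ℝ)) + (b:ℝ) + 2 = 2*(n:ℝ) := by exact_mod_cast congrArg (Nat.cast : ℕ → ℝ) h
      push_cast
      linarith
    calc Q n a * Q n (b+1) = (Q n a * f (2*n) ((a:ℝ)+1)) * Q n b := by
          rw [Q_succ, hfa]; ring
      _ = Q n (a+1) * Q n b := by rw [Q_succ]
      _ = (2*(n:ℝ))^2 := ih (a+1) (by omega)

/-- Odd/even split of partial products. -/
lemma Q_split : ∀ t, Q n (2*t) =
    (∏ j ∈ range t, f (2*n) (2*(j:ℝ)+1)) * (∏ j ∈ range t, f (2*n) (2*(j:ℝ)+2)) := by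
  intro t
  induction t with
  | zero => simp [Q]
  | succ t ih =>
    have h : 2*(t+1) = (2*t) + 1 + 1 := by omega
    rw [h, Q_succ, Q_succ, ih, prod_range_succ, prod_range_succ]
    have e1 : ((2*t:ℕ):ℝ)+1 = 2*(t:ℝ)+1 := by push_cast; ring
    have e2 : ((2*t+1:ℕ):ℝ)+1 = 2*(t:ℝ)+2 := by push_cast; ring
    rw [e1, e2]
    ring

/-- The even part equals `n²`. -/
lemma Q_even (hn : 1 ≤ n) : ∏ j ∈ range (n-1), f (2*n) (2*(j:ℝ)+2) = (n:ℝ)^2 := by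
  have hrw : ∀ j : ℕ, f (2*n) (2*(j:ℝ)+2) = f n ((j:ℝ)+1) := by
    intro j
    have hn' : ((n:ℕ):ℝ) ≠ 0 := by
      have h : n ≠ 0 := by omega
      exact_mod_cast h
    have harg : (2*(j:ℝ)+2) * Real.pi / ((2*n:ℕ):ℝ) = ((j:ℝ)+1) * Real.pi / ((n:ℕ):ℝ) := by
      push_cast
      field_simp
    rw [f, f, harg]
  rw [Finset.prod_congr rfl (fun j _ => hrw j)]
  have := prod_f (n-1)
  have h : n - 1 + 1 = n := by omega
  rw [h] at this
  rw [this]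
  have : ((n-1:ℕ):ℝ) = (n:ℝ) - 1 := by
    push_cast [Nat.cast_sub (by omega : 1 ≤ n)]; ring
  rw [this]; ring

/-- The odd product `∏_{j<n} f_{2n}(2j+1) = (2n)²/n²`. -/
lemma Q_odd (hn : 1 ≤ n) : ∏ j ∈ range n, f (2*n) (2*(j:ℝ)+1) = (2*(n:ℝ))^2 / (n:ℝ)^2 := by
  obtain ⟨m, rfl⟩ : ∃ m, n = m + 1 := ⟨n-1, by omega⟩
  rw [prod_range_succ]
  have hsplit := Q_split (m+1) m
  have hfull := Q_full (m+1) (by omega)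
  have h2 : 2*(m+1) - 1 = 2*m + 1 := by omega
  rw [h2, Q_succ, hsplit] at hfull
  have e1 : ((2*m:ℕ):ℝ)+1 = 2*(m:ℝ)+1 := by push_cast; ring
  rw [e1] at hfull
  have heven := Q_even (m+1) (by omega)
  rw [Nat.add_sub_cancel] at heven
  rw [heven] at hfull
  have hm1 : ((m:ℝ)+1) ≠ 0 := by positivity
  have hcast : ((m+1:ℕ):ℝ) = (m:ℝ)+1 := by push_cast; ring
  rw [hcast] at hfull ⊢
  field_simp
  apply mul_right_cancel₀ (pow_ne_zero 2 hm1)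
  linear_combination hfull

end PartialProducts

section Triangle

/-- Triangle swap: double product over `i < j` in `Fin n`. -/
lemma triangle (n : ℕ) (g : ℕ → ℕ → ℝ) :
    (∏ i : Fin n, ∏ j ∈ Finset.univ.filter (fun j => i < j), g (i:ℕ) (j:ℕ))
      = ∏ j ∈ range n, ∏ i ∈ range j, g i j := by
  rw [Finset.prod_comm' (t' := Finset.univ)
    (s' := fun j => Finset.univ.filter (fun i => i < j))
    (fun i j => by simp [Finset.mem_filter])]
  rw [← Fin.prod_univ_eq_prod_range (fun j => ∏ i ∈ range j, g i j) n]
  refine Finset.prod_congr rfl fun j _ => ?_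
  refine Finset.prod_bij' (fun i _ => (i:ℕ)) (fun m hm => (⟨m, ?_⟩ : Fin n)) ?_ ?_ ?_ ?_ ?_
  · exact lt_trans (Finset.mem_range.1 hm) j.isLt
  · intro i hi
    simp only [Finset.mem_filter, Finset.mem_univ, true_and] at hi
    exact Finset.mem_range.2 hi
  · intro m hm
    simp only [Finset.mem_filter, Finset.mem_univ, true_and]
    exact Finset.mem_range.1 hm
  · intro i hi; rfl
  · intro m hm; rfl
  · intro i hi; rfl

end Triangle



/-- The four extremal tuples. -/
def tup (n : ℕ) (b t : Bool) : Fin n → ℚ := fun i =>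
  (if (i:ℕ) = 0 then (if b then -1 else 0)
   else if (i:ℕ) = n-1 then ((n:ℚ) - 1) + (if t then 1 else 0) else ((i:ℕ):ℚ)) + 1/2

lemma tup_cast (n : ℕ) (b t : Bool) (i : Fin n) :
    ((tup n b t i : ℚ) : ℝ)
      = (if (i:ℕ) = 0 then (if b then (-1:ℝ) else 0)
         else if (i:ℕ) = n-1 then ((n:ℝ) - 1) + (if t then 1 else 0)
         else ((i:ℕ):ℝ)) + 1/2 := by
  rw [tup]
  split_ifs <;> push_cast <;> norm_num

/-- Reduction of a pair factor to the base-tuple factor. -/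
lemma factor_eq (n : ℕ) (hn : 4 ≤ n) (b t : Bool) (i j : Fin n) (hij : (i:ℕ) < (j:ℕ)) :
    f (2*n) (((tup n b t i : ℚ):ℝ) - ((tup n b t j : ℚ):ℝ))
      * f (2*n) (((tup n b t i : ℚ):ℝ) + ((tup n b t j : ℚ):ℝ))
    = f (2*n) (((j:ℕ):ℝ) - ((i:ℕ):ℝ)) * f (2*n) (((i:ℕ):ℝ) + ((j:ℕ):ℝ) + 1) := by
  have hjn : (j:ℕ) < n := j.isLt
  have hj0 : (j:ℕ) ≠ 0 := by omega
  have hinl : (i:ℕ) ≠ n-1 := by omega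
  rw [tup_cast, tup_cast]
  rcases eq_or_ne (i:ℕ) 0 with hi0 | hi0 <;> rcases eq_or_ne (j:ℕ) (n-1) with hjl | hjl
  · -- i = 0, j = n-1
    rw [if_pos hi0, if_neg hj0, if_pos hjl, hi0, hjl]
    have hc : ((n-1:ℕ):ℝ) = (n:ℝ) - 1 := by
      push_cast [Nat.cast_sub (by omega : 1 ≤ n)]; ring
    rw [hc, Nat.cast_zero]
    cases b <;> cases t <;> simp only [if_true, if_false, Bool.false_eq_true]
    · -- b=ff t=ff : direct
      rw [show f (2*n) (0 + 1/2 - ((n:ℝ)-1+0+1/2)) = f (2*n) ((n:ℝ)-1-0) from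
          f_eq _ (by right; left; push_cast; ring),
        show f (2*n) (0 + 1/2 + ((n:ℝ)-1+0+1/2)) = f (2*n) (0 + ((n:ℝ)-1) + 1) from
          f_eq _ (by left; push_cast; ring)]
    · -- b=ff t=tt : cross
      rw [mul_comm (f (2*n) (((n:ℝ)-1) - 0)) _]
      rw [show f (2*n) (0 + 1/2 - ((n:ℝ)-1+1+1/2)) = f (2*n) (0 + ((n:ℝ)-1) + 1) from
          f_eq _ (by right; left; push_cast; ring),
        show f (2*n) (0 + 1/2 + ((n:ℝ)-1+1+1/2)) = f (2*n) (((n:ℝ)-1) - 0) from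
          f_eq _ (by right; right; right; left; push_cast; ring)]
    · -- b=tt t=ff : cross
      rw [mul_comm (f (2*n) (((n:ℝ)-1) - 0)) _]
      rw [show f (2*n) (-1 + 1/2 - ((n:ℝ)-1+0+1/2)) = f (2*n) (0 + ((n:ℝ)-1) + 1) from
          f_eq _ (by right; left; push_cast; ring),
        show f (2*n) (-1 + 1/2 + ((n:ℝ)-1+0+1/2)) = f (2*n) (((n:ℝ)-1) - 0) from
          f_eq _ (by left; push_cast; ring)]
    · -- b=tt t=tt : direct
      rw [show f (2*n) (-1 + 1/2 - ((n:ℝ)-1+1+1/2)) = f (2*n) (((n:ℝ)-1) - 0) from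
          f_eq _ (by right; right; right; right; left; push_cast; ring),
        show f (2*n) (-1 + 1/2 + ((n:ℝ)-1+1+1/2)) = f (2*n) (0 + ((n:ℝ)-1) + 1) from
          f_eq _ (by left; push_cast; ring)]
  · -- i = 0, j middle
    rw [if_pos hi0, if_neg hj0, if_neg hjl, hi0, Nat.cast_zero]
    cases b <;> simp only [if_true, if_false, Bool.false_eq_true]
    · rw [show f (2*n) (0 + 1/2 - (((j:ℕ):ℝ) + 1/2)) = f (2*n) (((j:ℕ):ℝ) - 0) from
          f_eq _ (by right; left; push_cast; ring),
        show f (2*n) (0 + 1/2 + (((j:ℕ):ℝ) + 1/2)) = f (2*n) (0 + ((j:ℕ):ℝ) + 1) from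
          f_eq _ (by left; push_cast; ring)]
    · rw [mul_comm (f (2*n) (((j:ℕ):ℝ) - 0)) _]
      rw [show f (2*n) (-1 + 1/2 - (((j:ℕ):ℝ) + 1/2)) = f (2*n) (0 + ((j:ℕ):ℝ) + 1) from
          f_eq _ (by right; left; push_cast; ring),
        show f (2*n) (-1 + 1/2 + (((j:ℕ):ℝ) + 1/2)) = f (2*n) (((j:ℕ):ℝ) - 0) from
          f_eq _ (by left; push_cast; ring)]
  · -- i middle, j = n-1
    rw [if_neg hi0, if_neg hinl, if_neg hj0, if_pos hjl, hjl]
    have hc : ((n-1:ℕ):ℝ) = (n:ℝ) - 1 := by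
      push_cast [Nat.cast_sub (by omega : 1 ≤ n)]; ring
    rw [hc]
    cases t <;> simp only [if_true, if_false, Bool.false_eq_true]
    · rw [show f (2*n) (((i:ℕ):ℝ) + 1/2 - ((n:ℝ)-1+0+1/2)) = f (2*n) (((n:ℝ)-1) - ((i:ℕ):ℝ)) from
          f_eq _ (by right; left; push_cast; ring),
        show f (2*n) (((i:ℕ):ℝ) + 1/2 + ((n:ℝ)-1+0+1/2)) = f (2*n) (((i:ℕ):ℝ) + ((n:ℝ)-1) + 1) from
          f_eq _ (by left; push_cast; ring)]
    · rw [mul_comm (f (2*n) (((n:ℝ)-1) - ((i:ℕ):ℝ))) _]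
      rw [show f (2*n) (((i:ℕ):ℝ) + 1/2 - ((n:ℝ)-1+1+1/2)) = f (2*n) (((i:ℕ):ℝ) + ((n:ℝ)-1) + 1) from
          f_eq _ (by right; right; right; right; left; push_cast; ring),
        show f (2*n) (((i:ℕ):ℝ) + 1/2 + ((n:ℝ)-1+1+1/2)) = f (2*n) (((n:ℝ)-1) - ((i:ℕ):ℝ)) from
          f_eq _ (by right; right; right; left; push_cast; ring)]
  · -- both middle
    rw [if_neg hi0, if_neg hinl, if_neg hj0, if_neg hjl]
    rw [show f (2*n) (((i:ℕ):ℝ) + 1/2 - (((j:ℕ):ℝ) + 1/2)) = f (2*n) (((j:ℕ):ℝ) - ((i:ℕ):ℝ)) from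
        f_eq _ (by right; left; push_cast; ring),
      show f (2*n) (((i:ℕ):ℝ) + 1/2 + (((j:ℕ):ℝ) + 1/2)) = f (2*n) (((i:ℕ):ℝ) + ((j:ℕ):ℝ) + 1) from
        f_eq _ (by left; push_cast; ring)]

/-- Inner product over `i < j` equals the partial product `Q n (2j)`. -/
lemma inner_eq (n j : ℕ) :
    ∏ i ∈ range j, (f (2*n) ((j:ℝ) - (i:ℝ)) * f (2*n) ((i:ℝ) + (j:ℝ) + 1)) = Q n (2*j) := by
  rw [prod_mul_distrib, Q, show range (2*j) = range (j+j) by rw [two_mul], prod_range_add]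
  congr 1
  · rw [← prod_range_reflect (fun m => f (2*n) ((m:ℝ) + 1)) j]
    refine Finset.prod_congr rfl fun i hi => ?_
    have hij : i < j := Finset.mem_range.1 hi
    congr 1
    push_cast [Nat.cast_sub (show 1 ≤ j by omega), Nat.cast_sub (show i ≤ j-1 by omega)]
    ring
  · refine Finset.prod_congr rfl fun i hi => ?_
    congr 1
    push_cast
    ring

/-- The base double product. -/
lemma base_prod (n : ℕ) (hn : 4 ≤ n) :
    ∏ j ∈ range n, Q n (2*j) = (2*(n:ℝ))^n / 2 := by
  set B := ∏ j ∈ range n, Q n (2*j) with hB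
  have hQnn : ∀ t, 0 ≤ Q n t := fun t => Finset.prod_nonneg fun m _ => f_nonneg _ _
  have hBnn : 0 ≤ B := Finset.prod_nonneg fun j _ => hQnn _
  have hpoint : ∀ j ∈ range n, Q n (2*j) * Q n (2*(n-1-j)) = (2*(n:ℝ))^2 / f (2*n) (2*(j:ℝ)+1) := by
    intro j hj
    have hjn : j < n := Finset.mem_range.1 hj
    have hfpos : 0 < f (2*n) (2*(j:ℝ)+1) := by
      have := f_pos (2*n) (2*j+1) (by omega) (by omega)
      have hc : ((2*j+1:ℕ):ℝ) = 2*(j:ℝ)+1 := by push_cast; ring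
      rwa [hc] at this
    have hrefl := Q_reflect n (by omega) (2*(n-1-j)+1) (2*j) (by omega)
    rw [Q_succ] at hrefl
    have hfeq : f (2*n) (((2*(n-1-j):ℕ):ℝ)+1) = f (2*n) (2*(j:ℝ)+1) := by
      apply f_eq
      right; right; right; left
      have h : 2*(n-1-j) + 1 + (2*j+1) = 2*n := by omega
      have h2 : ((2*(n-1-j):ℕ):ℝ) + 1 + (2*(j:ℝ)+1) = 2*(n:ℝ) := by exact_mod_cast h
      push_cast
      push_cast at h2
      linarith
    rw [hfeq] at hrefl
    field_simp
    linear_combination hrefl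
  have hsq : B^2 = ((2*(n:ℝ))^n / 2)^2 := by
    have h1 : B^2 = ∏ j ∈ range n, (Q n (2*j) * Q n (2*(n-1-j))) := by
      rw [prod_mul_distrib, ← hB, sq]
      congr 1
      exact (prod_range_reflect (fun j => Q n (2*j)) n).symm
    rw [h1, Finset.prod_congr rfl hpoint, Finset.prod_div_distrib, Finset.prod_const,
      Finset.card_range, Q_odd n (by omega)]
    have hn0 : (n:ℝ) ≠ 0 := by
      have h : n ≠ 0 := by omega
      exact_mod_cast h
    have h2n0 : (2*(n:ℝ)) ≠ 0 := by positivity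
    field_simp
    rw [← mul_pow, ← pow_mul]
    ring
  have hc2 : (0:ℝ) ≤ (2*(n:ℝ))^n / 2 := by positivity
  nlinarith [hsq, hBnn, hc2, sq_nonneg (B - (2*(n:ℝ))^n / 2), sq_nonneg (B + (2*(n:ℝ))^n / 2)]

/-- Value of `Pi` on the four tuples. -/
lemma Pi_tup (n : ℕ) (hn : 4 ≤ n) (b t : Bool) :
    Pi (2*n) n (tup n b t) = (2*(n:ℝ))^n / 2 := by
  rw [Pi]
  have h1 : ∀ i : Fin n, ∀ j ∈ Finset.univ.filter (fun j => i < j),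
      f (2*n) (((tup n b t i : ℚ):ℝ) - ((tup n b t j : ℚ):ℝ))
        * f (2*n) (((tup n b t i : ℚ):ℝ) + ((tup n b t j : ℚ):ℝ))
      = f (2*n) (((j:ℕ):ℝ) - ((i:ℕ):ℝ)) * f (2*n) (((i:ℕ):ℝ) + ((j:ℕ):ℝ) + 1) := by
    intro i j hj
    simp only [Finset.mem_filter, Finset.mem_univ, true_and] at hj
    exact factor_eq n hn b t i j hj
  rw [Finset.prod_congr rfl (fun i _ => Finset.prod_congr rfl (h1 i))]
  rw [triangle n (fun i j => f (2*n) ((j:ℝ) - (i:ℝ)) * f (2*n) ((i:ℝ) + (j:ℝ) + 1))]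
  rw [Finset.prod_congr rfl (fun j _ => inner_eq n j)]
  exact base_prod n hn



section Tuples

variable {n : ℕ}

lemma tup_apply_of_ne (b t : Bool) (i : Fin n) (h0 : (i:ℕ) ≠ 0) (h1 : (i:ℕ) ≠ n-1) :
    tup n b t i = ((i:ℕ):ℚ) + 1/2 := by
  rw [tup, if_neg h0, if_neg h1]

lemma tup_strictMono (hn : 4 ≤ n) (b t : Bool) : StrictMono (tup n b t) := by
  intro i j hij
  have hij' : (i:ℕ) < (j:ℕ) := hij
  have hjn : (j:ℕ) < n := j.isLt
  rw [tup, tup]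
  have hj0 : (j:ℕ) ≠ 0 := by omega
  have hi1 : (i:ℕ) ≠ n-1 := by omega
  rw [if_neg hj0]
  have hcast : ((i:ℕ):ℚ) < ((j:ℕ):ℚ) := by exact_mod_cast hij'
  have hncast : ((j:ℕ):ℚ) ≤ (n:ℚ) - 1 := by
    have : (j:ℕ) ≤ n - 1 := by omega
    have h2 : ((j:ℕ):ℚ) ≤ ((n-1:ℕ):ℚ) := by exact_mod_cast this
    have h3 : ((n-1:ℕ):ℚ) = (n:ℚ) - 1 := by
      push_cast [Nat.cast_sub (by omega : 1 ≤ n)]; ring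
    linarith [h3 ▸ h2]
  rcases eq_or_ne (i:ℕ) 0 with hi0 | hi0
  · rw [if_pos hi0]
    rcases eq_or_ne (j:ℕ) (n-1) with hjl | hjl
    · rw [if_pos hjl]
      have hn4 : (4:ℚ) ≤ (n:ℚ) := by exact_mod_cast hn
      cases b <;> cases t <;> norm_num <;> linarith
    · rw [if_neg hjl]
      have : (1:ℚ) ≤ ((j:ℕ):ℚ) := by
        have : 1 ≤ (j:ℕ) := by omega
        exact_mod_cast this
      cases b <;> norm_num <;> linarith
  · rw [if_neg hi0, if_neg hi1]
    rcases eq_or_ne (j:ℕ) (n-1) with hjl | hjl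
    · rw [if_pos hjl]
      have : ((i:ℕ):ℚ) ≤ (n:ℚ) - 2 := by
        have h1 : (i:ℕ) ≤ n - 2 := by omega
        have h2 : ((i:ℕ):ℚ) ≤ ((n-2:ℕ):ℚ) := by exact_mod_cast h1
        have h3 : ((n-2:ℕ):ℚ) = (n:ℚ) - 2 := by
          push_cast [Nat.cast_sub (by omega : 2 ≤ n)]; ring
        linarith [h3 ▸ h2]
      cases t <;> norm_num <;> linarith
    · rw [if_neg hjl]
      linarith

lemma tup_half_odd (b t : Bool) (hn : 4 ≤ n) (i : Fin n) :
    ∃ z : ℤ, tup n b t i = (z : ℚ) + 1/2 := by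
  rw [tup]
  split_ifs with h1 h2 h3
  · exact ⟨-1, by norm_num⟩
  · exact ⟨0, by norm_num⟩
  · exact ⟨(n:ℤ) - 1 + 1, by push_cast; ring⟩
  · exact ⟨(n:ℤ) - 1, by push_cast; ring⟩
  · exact ⟨((i:ℕ):ℤ), by push_cast; ring⟩

lemma tup_ne_b (hn : 4 ≤ n) {b t b' t' : Bool} (hbb : b ≠ b') : tup n b t ≠ tup n b' t' := by
  intro h
  have h0 := congrFun h ⟨0, by omega⟩
  rw [tup, tup] at h0
  cases b <;> cases b' <;> simp at h0 hbb <;> norm_num at h0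

lemma tup_ne_t (hn : 4 ≤ n) {b t b' t' : Bool} (htt : t ≠ t') : tup n b t ≠ tup n b' t' := by
  intro h
  have h1 := congrFun h ⟨n-1, by omega⟩
  rw [tup, tup] at h1
  rw [if_neg (show ¬((⟨n-1, by omega⟩ : Fin n):ℕ) = 0 from by simp; omega),
      if_neg (show ¬((⟨n-1, by omega⟩ : Fin n):ℕ) = 0 from by simp; omega),
      if_pos (show ((⟨n-1, by omega⟩ : Fin n):ℕ) = n-1 from rfl),
      if_pos (show ((⟨n-1, by omega⟩ : Fin n):ℕ) = n-1 from rfl)] at h1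
  cases t <;> cases t' <;> simp at h1 htt <;> linarith

end Tuples

section Char

/-- Any tuple satisfying the constraints is one of the four extremal ones. -/
lemma char (n : ℕ) (hn : 4 ≤ n) (u : Fin n → ℚ)
    (h1 : StrictMono u)
    (h2 : ∀ i : Fin n, ∃ z : ℤ, u i = (z : ℚ) + 1 / 2)
    (h4 : 0 < u ⟨0, by omega⟩ + u ⟨1, by omega⟩)
    (h5 : u ⟨n - 2, by omega⟩ + u ⟨n - 1, by omega⟩ < 2 * n) :
    ∃ b t, u = tup n b t := by
  choose z hz using h2
  have hzmono : ∀ i j : Fin n, i < j → z i < z j := by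
    intro i j hij
    have := h1 hij
    rw [hz i, hz j] at this
    have h' : (z i : ℚ) < z j := by linarith
    exact_mod_cast h'
  have hgap : ∀ d : ℕ, ∀ i j : Fin n, (j:ℕ) = (i:ℕ) + d → z i + d ≤ z j := by
    intro d
    induction d with
    | zero =>
      intro i j hij
      have : i = j := Fin.ext (by omega)
      subst this; simp
    | succ d ih =>
      intro i j hij
      have hlt : (i:ℕ) + d < n := by have := j.isLt; omega
      set jm : Fin n := ⟨(i:ℕ) + d, hlt⟩ with hjm
      have h1' := ih i jm rfl
      have h2' : z jm < z j := hzmono jm j (by rw [Fin.lt_def]; simp [hjm]; omega)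
      push_cast
      omega
  set i0 : Fin n := ⟨0, by omega⟩
  set i1 : Fin n := ⟨1, by omega⟩
  set in2 : Fin n := ⟨n-2, by omega⟩
  set in1 : Fin n := ⟨n-1, by omega⟩
  have hsum0 : 0 ≤ z i0 + z i1 := by
    rw [hz i0, hz i1] at h4
    have : (-1:ℚ) < ((z i0 + z i1 : ℤ):ℚ) := by push_cast; linarith
    have h' : (-1:ℤ) < z i0 + z i1 := by exact_mod_cast this
    omega
  have hsumn : z in2 + z in1 ≤ 2*(n:ℤ) - 2 := by
    rw [hz in2, hz in1] at h5
    have : ((z in2 + z in1 : ℤ):ℚ) < ((2*(n:ℤ) - 1 : ℤ):ℚ) := by push_cast; push_cast at h5; linarith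
    have h' : z in2 + z in1 < 2*(n:ℤ) - 1 := by exact_mod_cast this
    omega
  have h01 : z i0 < z i1 := hzmono i0 i1 (by rw [Fin.lt_def]; norm_num)
  have h2n1 : z in2 < z in1 := hzmono in2 in1 (by rw [Fin.lt_def]; show n - 2 < n - 1; omega)
  have hg12 : z i1 + ((n-3:ℕ):ℤ) ≤ z in2 := hgap (n-3) i1 in2 (show n-2 = 1 + (n-3) by omega)
  have hcast3 : ((n-3:ℕ):ℤ) = (n:ℤ) - 3 := by push_cast [Nat.cast_sub (by omega : 3 ≤ n)]; ring
  rw [hcast3] at hg12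
  have hz1 : z i1 = 1 := by omega
  have hzn2 : z in2 = (n:ℤ) - 2 := by omega
  have hz0 : z i0 = -1 ∨ z i0 = 0 := by omega
  have hzn1 : z in1 = (n:ℤ) - 1 ∨ z in1 = (n:ℤ) := by omega
  have hmid : ∀ i : Fin n, (i:ℕ) ≠ 0 → (i:ℕ) ≠ n-1 → z i = ((i:ℕ):ℤ) := by
    intro i hi0 hi1
    have hlo := hgap ((i:ℕ) - 1) i1 i (show (i:ℕ) = 1 + ((i:ℕ)-1) by omega)
    have hhi := hgap (n - 2 - (i:ℕ)) i in2 (show n-2 = (i:ℕ) + (n-2-(i:ℕ)) by have := i.isLt; omega)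
    have hc1 : (((i:ℕ)-1:ℕ):ℤ) = ((i:ℕ):ℤ) - 1 := by
      push_cast [Nat.cast_sub (by omega : 1 ≤ (i:ℕ))]; ring
    have hc2 : ((n-2-(i:ℕ):ℕ):ℤ) = (n:ℤ) - 2 - ((i:ℕ):ℤ) := by
      have hin : (i:ℕ) ≤ n - 2 := by have := i.isLt; omega
      push_cast [Nat.cast_sub (by omega : 2 ≤ n), Nat.cast_sub hin]
      have : ((n-2:ℕ):ℤ) = (n:ℤ) - 2 := by push_cast [Nat.cast_sub (by omega : 2 ≤ n)]; ring
      omega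
    rw [hc1] at hlo
    rw [hc2] at hhi
    omega
  refine ⟨decide (z i0 = -1), decide (z in1 = (n:ℤ)), funext fun i => ?_⟩
  rw [hz i, tup]
  rcases eq_or_ne (i:ℕ) 0 with hi0 | hi0
  · have : i = i0 := Fin.ext hi0
    subst this
    rw [if_pos hi0]
    rcases hz0 with hc | hc <;> rw [hc] <;> simp [hc] <;> norm_num
  · rw [if_neg hi0]
    rcases eq_or_ne (i:ℕ) (n-1) with hi1 | hi1
    · have : i = in1 := Fin.ext hi1
      subst this
      rw [if_pos hi1]
      rcases hzn1 with hc | hc <;> rw [hc] <;> simp [hc] <;> push_cast <;> ring_nf <;>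
        simp [show ¬ ((n:ℤ) - 1 = n) by omega] <;> push_cast <;> ring
    · rw [if_neg hi1, hmid i hi0 hi1]
      push_cast; ring

end Char



lemma tup_pred (n : ℕ) (hn : 4 ≤ n) (b t : Bool) :
    StrictMono (tup n b t) ∧
    (∀ i : Fin n, ∃ z : ℤ, tup n b t i = (z : ℚ) + 1 / 2) ∧
    (∀ i : ℕ, ∀ h : i + 1 < n, ∃ z : ℤ,
      tup n b t ⟨i + 1, h⟩ - tup n b t ⟨i, by omega⟩ = (z : ℚ)) ∧
    0 < tup n b t ⟨0, by omega⟩ + tup n b t ⟨1, by omega⟩ ∧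
    tup n b t ⟨n - 2, by omega⟩ + tup n b t ⟨n - 1, by omega⟩ < 2 * n := by
  have e0 : tup n b t ⟨0, by omega⟩ = (if b then (-1:ℚ) else 0) + 1/2 := by
    rw [tup, if_pos (show ((⟨0, by omega⟩ : Fin n):ℕ) = 0 from rfl)]
  have e1 : tup n b t ⟨1, by omega⟩ = (1:ℚ) + 1/2 := by
    rw [tup_apply_of_ne b t ⟨1, by omega⟩ (show (1:ℕ) ≠ 0 by omega) (show (1:ℕ) ≠ n-1 by omega)]
    norm_num
  have e2 : tup n b t ⟨n-2, by omega⟩ = ((n:ℚ) - 2) + 1/2 := by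
    rw [tup_apply_of_ne b t ⟨n-2, by omega⟩ (show (n-2:ℕ) ≠ 0 by omega)
      (show (n-2:ℕ) ≠ n-1 by omega)]
    congr 1
    push_cast [Nat.cast_sub (show 2 ≤ n by omega)]
    ring
  have e3 : tup n b t ⟨n-1, by omega⟩ = ((n:ℚ) - 1) + (if t then (1:ℚ) else 0) + 1/2 := by
    rw [tup, if_neg (show ¬((⟨n-1, by omega⟩ : Fin n):ℕ) = 0 by simp; omega),
      if_pos (show ((⟨n-1, by omega⟩ : Fin n):ℕ) = n-1 from rfl)]
  have hn4 : (4:ℚ) ≤ (n:ℚ) := by exact_mod_cast hn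
  refine ⟨tup_strictMono hn b t, tup_half_odd b t hn, ?_, ?_, ?_⟩
  · intro i h
    obtain ⟨a, ha⟩ := tup_half_odd b t hn (⟨i+1, h⟩ : Fin n)
    obtain ⟨c, hc⟩ := tup_half_odd b t hn (⟨i, by omega⟩ : Fin n)
    exact ⟨a - c, by rw [ha, hc]; push_cast; ring⟩
  · rw [e0, e1]; cases b <;> norm_num
  · rw [e2, e3]; cases t <;> norm_num <;> linarith



/-- For `n ≥ 4` and `g ≥ 2`, the sum over all strictly increasing `n`-tuples of
half-odd-integers `u₁ < ⋯ < u_n` with integral successive differences, `u₁ + u₂ > 0`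
and `u_{n-1} + u_n < 2n`, of `(4 (2n)^n / Π_{2n}(U))^{g-1}`, equals `2^{3g-1}`.
(This is the level-2 Verlinde number `N₂⁻(Spin_{2n})`.) -/
theorem verlinde_N2_minus_spin_even (n g : ℕ) (hn : 4 ≤ n) (hg : 2 ≤ g) :
    ∑ᶠ (u : {u : Fin n → ℚ //
        StrictMono u ∧
        (∀ i : Fin n, ∃ z : ℤ, u i = (z : ℚ) + 1 / 2) ∧
        (∀ i : ℕ, ∀ h : i + 1 < n, ∃ z : ℤ, u ⟨i + 1, h⟩ - u ⟨i, by omega⟩ = (z : ℚ)) ∧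
        0 < u ⟨0, by omega⟩ + u ⟨1, by omega⟩ ∧
        u ⟨n - 2, by omega⟩ + u ⟨n - 1, by omega⟩ < 2 * n}),
      (4 * (2 * n : ℝ) ^ n / Pi (2 * n) n u.1) ^ (g - 1)
    = 2 ^ (3 * g - 1) := by
  classical
  have hset : {u : Fin n → ℚ |
      StrictMono u ∧
      (∀ i : Fin n, ∃ z : ℤ, u i = (z : ℚ) + 1 / 2) ∧
      (∀ i : ℕ, ∀ h : i + 1 < n, ∃ z : ℤ, u ⟨i + 1, h⟩ - u ⟨i, by omega⟩ = (z : ℚ)) ∧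
      0 < u ⟨0, by omega⟩ + u ⟨1, by omega⟩ ∧
      u ⟨n - 2, by omega⟩ + u ⟨n - 1, by omega⟩ < 2 * n}
      = (↑({tup n false false, tup n false true, tup n true false, tup n true true} :
          Finset (Fin n → ℚ)) : Set (Fin n → ℚ)) := by
    ext u
    simp only [Set.mem_setOf_eq, Finset.coe_insert, Set.mem_insert_iff,
      Finset.coe_singleton, Set.mem_singleton_iff]
    constructor
    · rintro ⟨h1, h2, h3, h4, h5⟩
      obtain ⟨b, t, rfl⟩ := char n hn u h1 h2 h4 h5
      cases b <;> cases t <;> tauto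
    · rintro (rfl | rfl | rfl | rfl) <;> exact tup_pred n hn _ _
  have h2 : ∑ᶠ (u : Fin n → ℚ) (_ : u ∈ {u : Fin n → ℚ |
      StrictMono u ∧
      (∀ i : Fin n, ∃ z : ℤ, u i = (z : ℚ) + 1 / 2) ∧
      (∀ i : ℕ, ∀ h : i + 1 < n, ∃ z : ℤ, u ⟨i + 1, h⟩ - u ⟨i, by omega⟩ = (z : ℚ)) ∧
      0 < u ⟨0, by omega⟩ + u ⟨1, by omega⟩ ∧
      u ⟨n - 2, by omega⟩ + u ⟨n - 1, by omega⟩ < 2 * n}),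
      (4 * (2 * n : ℝ) ^ n / Pi (2 * n) n u) ^ (g - 1) = 2 ^ (3 * g - 1) := by
    rw [hset, finsum_mem_coe_finset]
    have hval : ∀ b t : Bool,
          (4 * (2 * n : ℝ) ^ n / Pi (2 * n) n (tup n b t)) ^ (g - 1) = 8 ^ (g - 1) := by
      intro b t
      rw [Pi_tup n hn b t]
      congr 1
      have hX : (0:ℝ) < (2*(n:ℝ))^n := by
        have : (0:ℝ) < 2*(n:ℝ) := by
          have : (4:ℝ) ≤ (n:ℝ) := by exact_mod_cast hn
          linarith
        positivity
      field_simp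
      ring
    have hne1 : tup n false false ∉ ({tup n false true, tup n true false, tup n true true} :
        Finset (Fin n → ℚ)) := by
      simp only [Finset.mem_insert, Finset.mem_singleton]
      push_neg
      exact ⟨tup_ne_t hn (by simp), tup_ne_b hn (by simp), tup_ne_b hn (by simp)⟩
    have hne2 : tup n false true ∉ ({tup n true false, tup n true true} :
        Finset (Fin n → ℚ)) := by
      simp only [Finset.mem_insert, Finset.mem_singleton]
      push_neg
      exact ⟨tup_ne_b hn (by simp), tup_ne_b hn (by simp)⟩
    have hne3 : tup n true false ∉ ({tup n true true} : Finset (Fin n → ℚ)) := by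
      simp only [Finset.mem_singleton]
      exact tup_ne_t hn (by simp)
    rw [Finset.sum_insert hne1, Finset.sum_insert hne2, Finset.sum_insert hne3,
      Finset.sum_singleton, hval, hval, hval, hval]
    rw [show (8:ℝ) = 2^3 by norm_num, ← pow_mul]
    rw [show (2:ℝ)^(3*g-1) = 2^(3*(g-1)) * 2^2 by rw [← pow_add]; congr 1; omega]
    ring

  exact (finsum_subtype_eq_finsum_cond _).trans h2
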